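/- Let P, Q > 0 and for T > 0 set a(T) := (P/Q)·(1 − e^{−QT}). Let φ:(0,∞)→(0,∞) satisfy lim_{T→∞} φ(T) = ∞, and for each T > 0 let X_T be a Poisson random variable with mean a(T), i.e. P(X_T = x) = (a(T))^x e^{−a(T)}/x! for x ∈ ℤ⁺ = {0,1,2,…}. Then for every x > 0: lim_{ε→0⁺} limsup_{T→∞} (1/(φ(T)·ln φ(T))) · ln P( x − ε ≤ X_T/φ(T) ≤ x + ε ) = lim_{ε→0⁺} liminf_{T→∞} (1/(φ(T)·ln φ(T))) · ln P( x − ε ≤ X_T/φ(T) ≤ x + ε ) = −x. -/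

import Mathlib

open Filter Real Topology

/-- The probability that a Poisson random variable `X_T` with mean
`a(T) = (P/Q)(1 - e^{-QT})`, rescaled by `φ(T)`, lies in `[x-ε, x+ε]`: the sum of the Poisson
mass function over all integers `k` with `φ(T)(x-ε) ≤ k ≤ φ(T)(x+ε)`. -/
noncomputable def poissonProb (P Q φT x ε T : ℝ) : ℝ :=
  ∑' k : ℕ, if φT * (x - ε) ≤ (k : ℝ) ∧ (k : ℝ) ≤ φT * (x + ε)
    then (P / Q * (1 - Real.exp (-(Q * T)))) ^ k
      * Real.exp (-(P / Q * (1 - Real.exp (-(Q * T))))) / (Nat.factorial k)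
    else 0



lemma log_fact_le (n : ℕ) : Real.log (Nat.factorial n) ≤ n * Real.log n := by
  calc Real.log (Nat.factorial n) ≤ Real.log ((n:ℝ) ^ n) := by
        apply Real.log_le_log (by positivity)
        exact_mod_cast Nat.factorial_le_pow n
    _ = n * Real.log n := Real.log_pow n n

lemma log_fact_ge (n : ℕ) : (n:ℝ) * Real.log n - n ≤ Real.log (Nat.factorial n) := by
  rcases Nat.eq_zero_or_pos n with h | h
  · simp [h]
  have h1 : (n:ℝ) ^ n / Nat.factorial n ≤ Real.exp n := Real.pow_div_factorial_le_exp (x := (n:ℝ)) (Nat.cast_nonneg n) n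
  have hf : (0:ℝ) < Nat.factorial n := by exact_mod_cast Nat.factorial_pos n
  have h2 : (n:ℝ) ^ n ≤ Nat.factorial n * Real.exp n := by
    rw [div_le_iff₀ hf] at h1; linarith [h1]
  have h3 : Real.log ((n:ℝ) ^ n) ≤ Real.log (Nat.factorial n * Real.exp n) :=
    Real.log_le_log (by positivity) h2
  rw [Real.log_pow, Real.log_mul (ne_of_gt hf) (Real.exp_ne_zero _), Real.log_exp] at h3
  linarith



lemma poisson_summable (a : ℝ) : Summable (fun k : ℕ => a ^ k * Real.exp (-a) / Nat.factorial k) := by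
  have := (Real.summable_pow_div_factorial a).mul_right (Real.exp (-a))
  convert this using 2 with k
  · rfl
  ring

noncomputable def pSum (a φT x ε : ℝ) : ℝ :=
  ∑' k : ℕ, if φT * (x - ε) ≤ (k : ℝ) ∧ (k : ℝ) ≤ φT * (x + ε)
    then a ^ k * Real.exp (-a) / Nat.factorial k else 0

lemma pSum_summable (a φT x ε : ℝ) (ha : 0 ≤ a) :
    Summable (fun k : ℕ => if φT * (x - ε) ≤ (k : ℝ) ∧ (k : ℝ) ≤ φT * (x + ε)
      then a ^ k * Real.exp (-a) / Nat.factorial k else 0) := by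
  apply Summable.of_nonneg_of_le (fun k => ?_) (fun k => ?_) (poisson_summable a)
  · split <;> positivity
  · split
    · exact le_refl _
    · positivity

lemma pSum_lower (a φT x ε : ℝ) (ha : 0 ≤ a)
    (h2 : (⌈φT * (x - ε)⌉₊ : ℝ) ≤ φT * (x + ε)) :
    a ^ ⌈φT * (x - ε)⌉₊ * Real.exp (-a) / Nat.factorial ⌈φT * (x - ε)⌉₊ ≤ pSum a φT x ε := by
  set n := ⌈φT * (x - ε)⌉₊ with hn
  have hs := pSum_summable a φT x ε ha
  have := Summable.le_tsum hs n (fun i _ => by split <;> positivity)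
  rwa [if_pos ⟨Nat.le_ceil _, h2⟩] at this

lemma pSum_upper (a φT x ε : ℝ) (ha : 0 ≤ a)
    (h2a : 2 * a ≤ (⌈φT * (x - ε)⌉₊ : ℝ) + 1) :
    pSum a φT x ε ≤ 2 * (a ^ ⌈φT * (x - ε)⌉₊ * Real.exp (-a) / Nat.factorial ⌈φT * (x - ε)⌉₊) := by
  set n := ⌈φT * (x - ε)⌉₊ with hn
  set c := a ^ n * Real.exp (-a) / Nat.factorial n with hc
  have hc0 : 0 ≤ c := by positivity
  set g : ℕ → ℝ := fun k => if n ≤ k then a ^ k * Real.exp (-a) / Nat.factorial k else 0 with hg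
  have hgs : Summable g := by
    apply Summable.of_nonneg_of_le (fun k => ?_) (fun k => ?_) (poisson_summable a)
    · simp only [hg]; split <;> positivity
    · simp only [hg]; split
      · exact le_refl _
      · positivity
  have hfg : ∀ k : ℕ, (if φT * (x - ε) ≤ (k : ℝ) ∧ (k : ℝ) ≤ φT * (x + ε)
      then a ^ k * Real.exp (-a) / Nat.factorial k else 0) ≤ g k := by
    intro k
    simp only [hg]
    split
    · next h =>
      rw [if_pos (Nat.ceil_le.mpr h.1)]
    · split
      · positivity
      · exact le_refl _
  have h1 : pSum a φT x ε ≤ ∑' k, g k :=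
    Summable.tsum_le_tsum hfg (pSum_summable a φT x ε ha) hgs
  -- now bound tsum g
  have hsplit : ∑' k, g k = ∑ i ∈ Finset.range n, g i + ∑' i : ℕ, g (i + n) :=
    (Summable.sum_add_tsum_nat_add n hgs).symm
  have hzero : ∑ i ∈ Finset.range n, g i = 0 := by
    apply Finset.sum_eq_zero
    intro i hi
    simp only [hg]
    rw [Finset.mem_range] at hi
    rw [if_neg (by omega)]
  have htail : ∑' i : ℕ, g (i + n) ≤ 2 * c := by
    have hpt : ∀ i : ℕ, g (i + n) ≤ c * (1/2) ^ i := by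
      intro i
      have hle : n ≤ i + n := Nat.le_add_left n i
      simp only [hg, if_pos hle]
      have hfact : (Nat.factorial n : ℝ) * ((n:ℝ) + 1) ^ i ≤ (Nat.factorial (i + n) : ℝ) := by
        rw [Nat.add_comm i n]
        exact_mod_cast Nat.factorial_mul_pow_le_factorial (m := n) (n := i)
      have hd : (0:ℝ) < Nat.factorial n * ((n:ℝ) + 1) ^ i := by positivity
      have step1 : a ^ (i + n) * Real.exp (-a) / (Nat.factorial (i + n) : ℝ)
          ≤ a ^ (i + n) * Real.exp (-a) / (Nat.factorial n * ((n:ℝ) + 1) ^ i) :=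
        div_le_div_of_nonneg_left (by positivity) hd hfact
      have step2 : a ^ (i + n) * Real.exp (-a) / (Nat.factorial n * ((n:ℝ) + 1) ^ i)
          = c * (a / ((n:ℝ) + 1)) ^ i := by
        rw [hc, pow_add, div_pow]
        have h1 : (Nat.factorial n:ℝ) ≠ 0 := by positivity
        have h2 : ((n:ℝ) + 1) ^ i ≠ 0 := by positivity
        field_simp
      have step3 : c * (a / ((n:ℝ) + 1)) ^ i ≤ c * (1/2) ^ i := by
        apply mul_le_mul_of_nonneg_left _ hc0
        apply pow_le_pow_left₀ (by positivity)
        rw [div_le_div_iff₀ (by positivity) (by norm_num)]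
        linarith
      calc a ^ (i + n) * Real.exp (-a) / (Nat.factorial (i + n) : ℝ) ≤ _ := step1
        _ = _ := step2
        _ ≤ _ := step3
    have hgeo : Summable (fun i : ℕ => c * (1/2 : ℝ) ^ i) :=
      (summable_geometric_of_lt_one (by norm_num) (by norm_num)).mul_left c
    have := Summable.tsum_le_tsum hpt ((summable_nat_add_iff n).mpr hgs) hgeo
    calc ∑' i : ℕ, g (i + n) ≤ ∑' i : ℕ, c * (1/2:ℝ) ^ i := this
      _ = c * ∑' i : ℕ, (1/2:ℝ) ^ i := tsum_mul_left
      _ = c * 2 := by rw [tsum_geometric_of_lt_one (by norm_num) (by norm_num)]; norm_num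
      _ = 2 * c := by ring
  calc pSum a φT x ε ≤ ∑' k, g k := h1
    _ = ∑ i ∈ Finset.range n, g i + ∑' i : ℕ, g (i + n) := hsplit
    _ = ∑' i : ℕ, g (i + n) := by rw [hzero, zero_add]
    _ ≤ 2 * c := htail


lemma key (P Q : ℝ) (hP : 0 < P) (hQ : 0 < Q) (φ : ℝ → ℝ)
    (hφ : Tendsto φ atTop atTop) (x ε : ℝ) (hε : 0 < ε) (hεx : ε < x) :
    Tendsto (fun T => (1 / (φ T * Real.log (φ T))) *
        Real.log (pSum (P / Q * (1 - Real.exp (-(Q * T)))) (φ T) x ε))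
      atTop (nhds (-(x - ε))) := by
  have hxε : (0:ℝ) < x - ε := by linarith
  set a : ℝ := P / Q with ha_def
  have ha : 0 < a := div_pos hP hQ
  set aT : ℝ → ℝ := fun T => P / Q * (1 - Real.exp (-(Q * T))) with haT_def
  set n : ℝ → ℕ := fun T => ⌈φ T * (x - ε)⌉₊ with hn_def
  set c : ℝ → ℝ := fun T => aT T ^ n T * Real.exp (-(aT T)) / Nat.factorial (n T) with hc_def
  -- aT tends to a
  have hexp : Tendsto (fun T : ℝ => Real.exp (-(Q * T))) atTop (nhds 0) := by
    apply Real.tendsto_exp_atBot.comp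
    apply tendsto_neg_atTop_atBot.comp
    exact (tendsto_const_mul_atTop_of_pos hQ).mpr tendsto_id
  have haTlim : Tendsto aT atTop (nhds a) := by
    have := ((tendsto_const_nhds (x := (1:ℝ))).sub hexp).const_mul (P / Q)
    simpa using this
  have haT_lb : ∀ᶠ T in atTop, a / 2 < aT T :=
    haTlim.eventually (eventually_gt_nhds (by linarith))
  have haT_pos : ∀ᶠ T in atTop, 0 < aT T :=
    haT_lb.mono fun T h => lt_trans (by linarith) h
  have haT_ub : ∀ T, aT T ≤ a := by
    intro T
    have h1 : Real.exp (-(Q * T)) ≥ 0 := (Real.exp_pos _).le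
    have : 1 - Real.exp (-(Q * T)) ≤ 1 := by linarith
    calc aT T = a * (1 - Real.exp (-(Q * T))) := rfl
      _ ≤ a * 1 := by nlinarith
      _ = a := mul_one a
  -- eventual size conditions on φ
  have hφbig : ∀ᶠ T in atTop, 2 ≤ φ T ∧ 1 ≤ 2 * ε * φ T ∧ 2 * a ≤ φ T * (x - ε)
      ∧ 1 ≤ φ T * (x - ε) := by
    have h1 := hφ.eventually_ge_atTop 2
    have h2 := hφ.eventually_ge_atTop (1 / (2 * ε))
    have h3 := hφ.eventually_ge_atTop (2 * a / (x - ε))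
    have h4 := hφ.eventually_ge_atTop (1 / (x - ε))
    filter_upwards [h1, h2, h3, h4] with T h1 h2 h3 h4
    refine ⟨h1, ?_, ?_, ?_⟩
    · rw [div_le_iff₀ (by positivity)] at h2; nlinarith
    · rw [div_le_iff₀ hxε] at h3; nlinarith
    · rw [div_le_iff₀ hxε] at h4; nlinarith
  -- bounds on n
  have hn_lb : ∀ T, φ T * (x - ε) ≤ (n T : ℝ) := fun T => Nat.le_ceil _
  have hn_ub : ∀ᶠ T in atTop, (n T : ℝ) < φ T * (x - ε) + 1 := by
    filter_upwards [hφbig] with T hT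
    exact Nat.ceil_lt_add_one (by nlinarith [hT.1])
  -- c ≤ pSum ≤ 2c eventually
  have hcpos : ∀ᶠ T in atTop, 0 < c T := by
    filter_upwards [haT_pos] with T hT
    positivity
  have hlow : ∀ᶠ T in atTop, c T ≤ pSum (aT T) (φ T) x ε := by
    filter_upwards [haT_pos, hφbig, hn_ub] with T h1 h2 h3
    apply pSum_lower _ _ _ _ h1.le
    have : φ T * (x - ε) + 1 ≤ φ T * (x + ε) := by nlinarith [h2.2.1]
    exact le_trans h3.le this
  have hhigh : ∀ᶠ T in atTop, pSum (aT T) (φ T) x ε ≤ 2 * c T := by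
    filter_upwards [haT_pos, hφbig] with T h1 h2
    apply pSum_upper _ _ _ _ h1.le
    have := hn_lb T
    have h3 := haT_ub T
    have := h2.2.2.1
    linarith
  -- log c decomposition
  have hlogc : ∀ᶠ T in atTop, Real.log (c T)
      = (n T : ℝ) * Real.log (aT T) - aT T - Real.log (Nat.factorial (n T)) := by
    filter_upwards [haT_pos] with T hT
    have hf : (Nat.factorial (n T) : ℝ) ≠ 0 := by positivity
    rw [hc_def]
    rw [Real.log_div (by positivity) hf, Real.log_mul (by positivity) (Real.exp_ne_zero _),
      Real.log_pow, Real.log_exp]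
    ring
  -- building block limits
  have hlogφ : Tendsto (fun T => Real.log (φ T)) atTop atTop :=
    Real.tendsto_log_atTop.comp hφ
  have hloginv : Tendsto (fun T => 1 / Real.log (φ T)) atTop (nhds 0) := by
    simpa [one_div, Function.comp_def] using tendsto_inv_atTop_zero.comp hlogφ
  have hφloginv : Tendsto (fun T => 1 / (φ T * Real.log (φ T))) atTop (nhds 0) :=
    (tendsto_inv_atTop_zero.comp (hφ.atTop_mul_atTop₀ hlogφ)).congr fun T => (one_div _).symm
  have hφpos' : ∀ᶠ T in atTop, 0 < φ T := hφ.eventually_gt_atTop 0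
  have hlogφpos : ∀ᶠ T in atTop, 0 < Real.log (φ T) := hlogφ.eventually_gt_atTop 0
  have hnφ : Tendsto (fun T => (n T : ℝ) / φ T) atTop (nhds (x - ε)) := by
    apply tendsto_of_tendsto_of_tendsto_of_le_of_le' (g := fun _ => x - ε)
      (h := fun T => (x - ε) + 1 / φ T) tendsto_const_nhds
    · simpa using tendsto_const_nhds.add ((tendsto_inv_atTop_zero.comp hφ).congr fun T => (one_div _).symm)
    · filter_upwards [hφpos'] with T hT
      rw [le_div_iff₀ hT]; exact (mul_comm _ _).trans_le (by simpa [mul_comm] using hn_lb T)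
    · filter_upwards [hφpos', hn_ub] with T hT h2
      rw [div_le_iff₀ hT]
      calc (n T : ℝ) ≤ φ T * (x - ε) + 1 := h2.le
        _ = (x - ε) * φ T + 1 := by ring
        _ ≤ ((x - ε) + 1 / φ T) * φ T := le_of_eq (by field_simp)
  have hlogratio : Tendsto (fun T => Real.log (n T) / Real.log (φ T)) atTop (nhds 1) := by
    apply tendsto_of_tendsto_of_tendsto_of_le_of_le'
      (g := fun T => 1 + Real.log (x - ε) * (1 / Real.log (φ T)))
      (h := fun T => 1 + (Real.log 2 + Real.log (x - ε)) * (1 / Real.log (φ T)))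
    · simpa using tendsto_const_nhds.add (tendsto_const_nhds.mul hloginv)
    · simpa using tendsto_const_nhds.add (tendsto_const_nhds.mul hloginv)
    · filter_upwards [hφpos', hφbig, hlogφpos] with T h1 h2 h3
      have hnpos : (1:ℝ) ≤ (n T : ℝ) := le_trans h2.2.2.2 (hn_lb T)
      have hlog1 : Real.log (φ T * (x - ε)) ≤ Real.log (n T) :=
        Real.log_le_log (by nlinarith [h2.2.2.2]) (hn_lb T)
      rw [Real.log_mul (by positivity) (ne_of_gt hxε)] at hlog1
      rw [le_div_iff₀ h3]
      calc (1 + Real.log (x - ε) * (1 / Real.log (φ T))) * Real.log (φ T)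
          = Real.log (φ T) + Real.log (x - ε) := by field_simp
        _ ≤ Real.log (n T) := hlog1
    · filter_upwards [hφpos', hφbig, hlogφpos, hn_ub] with T h1 h2 h3 h4
      have hb : (n T : ℝ) ≤ 2 * (φ T * (x - ε)) := by nlinarith [h2.2.2.2]
      have hnpos : (0:ℝ) < (n T : ℝ) := lt_of_lt_of_le (by linarith [h2.2.2.2]) (hn_lb T)
      have hlog1 : Real.log (n T) ≤ Real.log (2 * (φ T * (x - ε))) :=
        Real.log_le_log hnpos hb
      rw [Real.log_mul (by norm_num) (by positivity),
        Real.log_mul (by positivity) (ne_of_gt hxε)] at hlog1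
      rw [div_le_iff₀ h3]
      calc Real.log (n T) ≤ Real.log 2 + (Real.log (φ T) + Real.log (x - ε)) := hlog1
        _ = (1 + (Real.log 2 + Real.log (x - ε)) * (1 / Real.log (φ T))) * Real.log (φ T) := by
            field_simp; ring
  have hn_atTop : Tendsto (fun T => (n T : ℝ)) atTop atTop := by
    apply tendsto_atTop_mono (fun T => hn_lb T)
    exact hφ.atTop_mul_const hxε
  -- the three sub-limits
  have t1 : Tendsto (fun T => (n T : ℝ) * Real.log (aT T) / (φ T * Real.log (φ T)))
      atTop (nhds 0) := by
    have hlogaT : Tendsto (fun T => Real.log (aT T)) atTop (nhds (Real.log a)) :=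
      ((Real.continuousAt_log (ne_of_gt ha)).tendsto.comp haTlim)
    have := (hnφ.mul (hlogaT.mul hloginv))
    apply Tendsto.congr' _ (by simpa using this)
    filter_upwards [hφpos', hlogφpos] with T h1 h2
    field_simp
  have t2 : Tendsto (fun T => aT T / (φ T * Real.log (φ T))) atTop (nhds 0) := by
    have h := haTlim.mul hφloginv
    rw [mul_zero] at h
    exact h.congr fun T => mul_one_div _ _
  have t3 : Tendsto (fun T => Real.log (Nat.factorial (n T)) / (φ T * Real.log (φ T)))
      atTop (nhds (x - ε)) := by
    apply tendsto_of_tendsto_of_tendsto_of_le_of_le'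
      (g := fun T => (n T : ℝ) / φ T * (Real.log (n T) / Real.log (φ T))
        - (n T : ℝ) / φ T * (1 / Real.log (φ T)))
      (h := fun T => (n T : ℝ) / φ T * (Real.log (n T) / Real.log (φ T)))
    · have := (hnφ.mul hlogratio).sub (hnφ.mul hloginv)
      simpa using this
    · simpa using hnφ.mul hlogratio
    · filter_upwards [hφpos', hlogφpos] with T h1 h2
      calc (n T : ℝ) / φ T * (Real.log (n T) / Real.log (φ T))
            - (n T : ℝ) / φ T * (1 / Real.log (φ T))
          = ((n T : ℝ) * Real.log (n T) - n T) / (φ T * Real.log (φ T)) := by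
            field_simp
        _ ≤ Real.log (Nat.factorial (n T)) / (φ T * Real.log (φ T)) :=
            (div_le_div_iff_of_pos_right (by positivity)).mpr (log_fact_ge (n T))
    · filter_upwards [hφpos', hlogφpos] with T h1 h2
      calc Real.log (Nat.factorial (n T)) / (φ T * Real.log (φ T))
          ≤ ((n T : ℝ) * Real.log (n T)) / (φ T * Real.log (φ T)) :=
            (div_le_div_iff_of_pos_right (by positivity)).mpr (log_fact_le (n T))
        _ = (n T : ℝ) / φ T * (Real.log (n T) / Real.log (φ T)) := by
            field_simp
  -- combine
  have hA : Tendsto (fun T => 1 / (φ T * Real.log (φ T)) * Real.log (c T))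
      atTop (nhds (-(x - ε))) := by
    have hcomb := (t1.sub t2).sub t3
    rw [show (0:ℝ) - 0 - (x - ε) = -(x - ε) by ring] at hcomb
    apply Tendsto.congr' _ hcomb
    filter_upwards [hlogc, hφpos', hlogφpos] with T h1 h2 h3
    rw [h1]
    field_simp
  have hB : Tendsto (fun T => 1 / (φ T * Real.log (φ T)) * (Real.log 2 + Real.log (c T)))
      atTop (nhds (-(x - ε))) := by
    have := (hφloginv.mul (tendsto_const_nhds (x := Real.log 2))).add hA
    rw [zero_mul, zero_add] at this
    apply Tendsto.congr _ this
    intro T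
    ring
  apply tendsto_of_tendsto_of_tendsto_of_le_of_le' hA hB
  · filter_upwards [hcpos, hlow, hφpos', hlogφpos] with T h1 h2 h3 h4
    have hu : 0 ≤ 1 / (φ T * Real.log (φ T)) := by positivity
    exact mul_le_mul_of_nonneg_left (Real.log_le_log h1 h2) hu
  · filter_upwards [hcpos, hlow, hhigh, hφpos', hlogφpos] with T h1 h2 h3 h4 h5
    have hu : 0 ≤ 1 / (φ T * Real.log (φ T)) := by positivity
    have hp : 0 < pSum (aT T) (φ T) x ε := lt_of_lt_of_le h1 h2
    have := Real.log_le_log hp h3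
    rw [Real.log_mul (by norm_num) (ne_of_gt h1)] at this
    exact mul_le_mul_of_nonneg_left this hu

lemma poissonProb_eq (P Q φT x ε T : ℝ) :
    poissonProb P Q φT x ε T = pSum (P / Q * (1 - Real.exp (-(Q * T)))) φT x ε := rfl

/-- Let `P, Q > 0`, `a(T) = (P/Q)(1-e^{-QT})`, `φ(T) → ∞`, and let `X_T` be Poisson with mean
`a(T)`. Then for every `x > 0`, both the `limsup` and the `liminf` (as `T → ∞`) of
`(1/(φ(T) ln φ(T))) ln P(x-ε ≤ X_T/φ(T) ≤ x+ε)` tend to `-x` as `ε → 0⁺`. -/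
theorem stmt_12 (P Q : ℝ) (hP : 0 < P) (hQ : 0 < Q)
    (φ : ℝ → ℝ) (hφpos : ∀ T > (0:ℝ), 0 < φ T)
    (hφ : Filter.Tendsto φ Filter.atTop Filter.atTop)
    (x : ℝ) (hx : 0 < x) :
    Filter.Tendsto (fun ε : ℝ =>
      Filter.limsup (fun T : ℝ =>
        (1 / (φ T * Real.log (φ T))) * Real.log (poissonProb P Q (φ T) x ε T))
        Filter.atTop)
      (nhdsWithin 0 (Set.Ioi 0)) (nhds (-x)) ∧
    Filter.Tendsto (fun ε : ℝ =>
      Filter.liminf (fun T : ℝ =>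
        (1 / (φ T * Real.log (φ T))) * Real.log (poissonProb P Q (φ T) x ε T))
        Filter.atTop)
      (nhdsWithin 0 (Set.Ioi 0)) (nhds (-x)) := by
  have hmain : ∀ ε ∈ Set.Ioo (0:ℝ) x, Tendsto (fun T =>
      (1 / (φ T * Real.log (φ T))) * Real.log (poissonProb P Q (φ T) x ε T))
      atTop (nhds (-(x - ε))) := by
    intro ε hε
    have h := key P Q hP hQ φ hφ x ε hε.1 hε.2
    apply h.congr
    intro T
    rw [poissonProb_eq]
  have hIoo : Set.Ioo (0:ℝ) x ∈ nhdsWithin (0:ℝ) (Set.Ioi 0) :=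
    Ioo_mem_nhdsGT_of_mem ⟨le_refl 0, hx⟩
  have hbase : Tendsto (fun ε : ℝ => -(x - ε)) (nhdsWithin 0 (Set.Ioi 0)) (nhds (-x)) := by
    have h : Tendsto (fun ε : ℝ => -(x - ε)) (nhds 0) (nhds (-(x - 0))) :=
      ((continuous_const.sub continuous_id).neg).tendsto 0
    simpa using h.mono_left nhdsWithin_le_nhds
  constructor
  · apply Tendsto.congr' _ hbase
    filter_upwards [hIoo] with ε hε
    exact ((hmain ε hε).limsup_eq).symm
  · apply Tendsto.congr' _ hbase
    filter_upwards [hIoo] with ε hε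
    exact ((hmain ε hε).liminf_eq).symm
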